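/- For 0 ≤ r < 1, set p₁ = √(3(1-r)/(1+r)), p₂ = -p₁, p₃ = 0, and p̂₁ = -p₁/3, p̂₂ = p₁/3, p̂₃ = ∞. Then the six pole points P₁* = ((r-2)/(1-2r), 0), P₂* = (1, -p₁), P₃* = (1, p₁), P̂₁* = ((r+2)/(2r+1), 0), P̂₂* = (-1, 3/p₁), P̂₃* = (-1, -3/p₁) all lie on the conic (1-4r²)x² + 6rx + (1-r²)y² + r² - 4 = 0 (assuming r ≠ 1/2 and p₁ ≠ 0 where needed). -/

import Mathlib

/-- A point `(x,y)` lies on the Poncelet conic `Γ(r,0)`. -/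
def onGamma (r x y : ℝ) : Prop :=
  (1 - 4 * r ^ 2) * x ^ 2 + 6 * r * x + (1 - r ^ 2) * y ^ 2 + r ^ 2 - 4 = 0

/-- The six poles of the sides of the two special ideal triangles with hyperbolic
barycenter `(r,0)` all lie on the conic `(1-4r²)x² + 6rx + (1-r²)y² + r² - 4 = 0`. -/
theorem stmt_10 (r p₁ : ℝ) (hr0 : 0 ≤ r) (hr1 : r < 1) (hrhalf : r ≠ 1 / 2)
    (hp₁ : p₁ = Real.sqrt (3 * (1 - r) / (1 + r))) (hp₁0 : p₁ ≠ 0) :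
    onGamma r ((r - 2) / (1 - 2 * r)) 0 ∧
    onGamma r 1 (-p₁) ∧
    onGamma r 1 p₁ ∧
    onGamma r ((r + 2) / (2 * r + 1)) 0 ∧
    onGamma r (-1) (3 / p₁) ∧
    onGamma r (-1) (-(3 / p₁)) := by
  have h1r : (0:ℝ) < 1 + r := by linarith
  have h1r' : (0:ℝ) < 1 - r := by linarith
  have harg : 0 ≤ 3 * (1 - r) / (1 + r) := by positivity
  have hsq : p₁ ^ 2 = 3 * (1 - r) / (1 + r) := by
    rw [hp₁, sq, Real.mul_self_sqrt harg]
  have h2r : (1 : ℝ) - 2 * r ≠ 0 := by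
    intro h; apply hrhalf; linarith
  have h2r' : (2 : ℝ) * r + 1 ≠ 0 := by positivity
  refine ⟨?_, ?_, ?_, ?_, ?_, ?_⟩ <;> unfold onGamma
  · have h2 : (1 - r * 2 : ℝ) ≠ 0 := by contrapose! h2r; linarith
    field_simp
    ring
  · rw [neg_pow, hsq]; field_simp; ring
  · rw [hsq]; field_simp; ring
  · have h2 : (1 + r * 2 : ℝ) ≠ 0 := by contrapose! h2r'; linarith
    field_simp
    ring
  all_goals {
    have key : (3 / p₁) ^ 2 = 3 * (1 + r) / (1 - r) := by
      rw [div_pow, hsq]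
      field_simp
    first
      | rw [key]
      | (simp only [neg_sq]; rw [key])
    field_simp
    ring }
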